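/- Fix ν > 2 and θ ∈ [1/2, 1]. For every h > 0, the 2×2 matrix A_θ(h) with entries a₁₁ = (1 - (θh² + νh)(1-θ))/(1+Δ), a₁₂ = -h/(1+Δ), a₂₁ = h/(1+Δ), a₂₂ = (1 - θ(1-θ)h² + νθh)/(1+Δ), where Δ = θ(θh² + νh), satisfies |tr A_θ| < 1 + det A_θ < 2, and its two eigenvalues λ_{1,2} = (2 + νh(2θ-1) - 2θ(1-θ)h² ± √(ν²-4) h)/(2(1+Δ)) are real, distinct, and of modulus strictly less than 1. -/

import Mathlib

noncomputable section

/-- `Δ = θ(θh² + νh)`. -/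
def Δ (θ ν h : ℝ) : ℝ := θ * (θ * h ^ 2 + ν * h)

def a11 (θ ν h : ℝ) : ℝ := (1 - (θ * h ^ 2 + ν * h) * (1 - θ)) / (1 + Δ θ ν h)
def a12 (θ ν h : ℝ) : ℝ := -h / (1 + Δ θ ν h)
def a21 (θ ν h : ℝ) : ℝ := h / (1 + Δ θ ν h)
def a22 (θ ν h : ℝ) : ℝ := (1 - θ * (1 - θ) * h ^ 2 + ν * θ * h) / (1 + Δ θ ν h)

/-- Trace of the one-step matrix of the stochastic θ-method. -/
def trA (θ ν h : ℝ) : ℝ := a11 θ ν h + a22 θ ν h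

/-- Determinant of the one-step matrix of the stochastic θ-method. -/
def detA (θ ν h : ℝ) : ℝ := a11 θ ν h * a22 θ ν h - a12 θ ν h * a21 θ ν h

/-- Eigenvalues `λ_{1,2}` of the one-step matrix. -/
def lam1 (θ ν h : ℝ) : ℝ :=
  (2 + ν * h * (2 * θ - 1) - 2 * θ * (1 - θ) * h ^ 2 + Real.sqrt (ν ^ 2 - 4) * h) /
    (2 * (1 + Δ θ ν h))

def lam2 (θ ν h : ℝ) : ℝ :=
  (2 + ν * h * (2 * θ - 1) - 2 * θ * (1 - θ) * h ^ 2 - Real.sqrt (ν ^ 2 - 4) * h) /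
    (2 * (1 + Δ θ ν h))

set_option maxHeartbeats 1600000 in
theorem theta_method_stability
    (ν θ : ℝ) (hν : 2 < ν) (hθ : θ ∈ Set.Icc (1/2 : ℝ) 1) :
    ∀ h : ℝ, 0 < h →
      |trA θ ν h| < 1 + detA θ ν h ∧ 1 + detA θ ν h < 2 ∧
      lam1 θ ν h ^ 2 - trA θ ν h * lam1 θ ν h + detA θ ν h = 0 ∧
      lam2 θ ν h ^ 2 - trA θ ν h * lam2 θ ν h + detA θ ν h = 0 ∧
      lam1 θ ν h ≠ lam2 θ ν h ∧
      |lam1 θ ν h| < 1 ∧ |lam2 θ ν h| < 1 := by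
  obtain ⟨hθ1, hθ2⟩ := hθ
  intro h hh
  have hθ0 : (0:ℝ) < θ := by linarith
  have hν0 : (0:ℝ) < ν := by linarith
  set D := 1 + Δ θ ν h with hDdef
  have hD : 0 < D := by
    have : 0 ≤ θ * (θ * h ^ 2 + ν * h) := by positivity
    simp only [hDdef, Δ]; linarith
  set s := Real.sqrt (ν ^ 2 - 4) with hsdef
  have hs2 : s ^ 2 = ν ^ 2 - 4 := Real.sq_sqrt (by nlinarith)
  have hs : 0 < s := Real.sqrt_pos.mpr (by nlinarith)
  have hsν : s < ν := by nlinarith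
  set T := 2 + ν * h * (2 * θ - 1) - 2 * θ * (1 - θ) * h ^ 2 with hTdef
  set E := 1 + (1 - θ) ^ 2 * h ^ 2 - (1 - θ) * ν * h with hEdef
  have hD' : (1 + θ * (θ * h ^ 2 + ν * h)) ≠ 0 := by
    have heq : D = 1 + θ * (θ * h ^ 2 + ν * h) := by simp [hDdef, Δ]
    rw [← heq]; exact ne_of_gt hD
  have hTr : trA θ ν h = T / D := by
    simp only [trA, a11, a22, hTdef, hDdef, Δ]
    rw [← add_div]
    ring_nf
  have hDet : detA θ ν h = E / D := by
    simp only [detA, a11, a12, a21, a22, hEdef, hDdef, Δ]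
    field_simp
    ring
  have hL1 : lam1 θ ν h = (T + s * h) / (2 * D) := rfl
  have hL2 : lam2 θ ν h = (T - s * h) / (2 * D) := rfl
  have key1 : D + E - T = h ^ 2 := by simp only [hDdef, hEdef, hTdef, Δ]; ring
  have key2 : D + E + T = 4 + (2*θ-1)^2 * h^2 + 2*ν*h*(2*θ-1) := by
    simp only [hDdef, hEdef, hTdef, Δ]; ring
  have key3 : D - E = (2*θ-1) * h^2 + ν * h := by
    simp only [hDdef, hEdef, Δ]; ring
  have key4 : T ^ 2 - 4 * D * E = (ν ^ 2 - 4) * h ^ 2 := by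
    simp only [hDdef, hEdef, hTdef, Δ]; ring
  have h2θ : 0 ≤ 2 * θ - 1 := by linarith
  have hq1 : 0 ≤ (2*θ-1) * h^2 := by positivity
  have hq2 : 0 ≤ (2*θ-1)^2 * h^2 := by positivity
  have hq3 : 0 ≤ 2*ν*h*(2*θ-1) := by positivity
  have hsh : 0 < s * h := mul_pos hs hh
  have hνsh : 0 < (ν - s) * h := mul_pos (by linarith) hh
  have hνh : 0 < ν * h := mul_pos hν0 hh
  have hh2 : 0 < h ^ 2 := by positivity
  have habs : |trA θ ν h| < 1 + detA θ ν h := by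
    rw [hTr, hDet, abs_lt]
    have hED : 1 + E / D = (D + E) / D := by field_simp
    constructor
    · rw [hED, neg_lt, ← neg_div]
      exact div_lt_div_of_pos_right (by nlinarith) hD
    · rw [hED]
      exact div_lt_div_of_pos_right (by nlinarith) hD
  have hd2 : 1 + detA θ ν h < 2 := by
    rw [hDet]
    have : E / D < 1 := (div_lt_one hD).mpr (by nlinarith)
    linarith
  have heig1 : lam1 θ ν h ^ 2 - trA θ ν h * lam1 θ ν h + detA θ ν h = 0 := by
    rw [hL1, hTr, hDet]
    have hcalc : ((T + s*h)/(2*D))^2 - T/D * ((T+s*h)/(2*D)) + E/D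
        = (s^2*h^2 - (T^2 - 4*D*E)) / (4*D^2) := by
      field_simp
      ring
    rw [hcalc, hs2, key4]
    ring_nf
  have heig2 : lam2 θ ν h ^ 2 - trA θ ν h * lam2 θ ν h + detA θ ν h = 0 := by
    rw [hL2, hTr, hDet]
    have hcalc : ((T - s*h)/(2*D))^2 - T/D * ((T-s*h)/(2*D)) + E/D
        = (s^2*h^2 - (T^2 - 4*D*E)) / (4*D^2) := by
      field_simp
      ring
    rw [hcalc, hs2, key4]
    ring_nf
  have hne : lam1 θ ν h ≠ lam2 θ ν h := by
    rw [hL1, hL2]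
    intro heq
    rw [div_eq_div_iff (by positivity) (by positivity)] at heq
    nlinarith
  have hl1 : |lam1 θ ν h| < 1 := by
    rw [hL1, abs_div, abs_of_pos (show (0:ℝ) < 2*D by linarith),
        div_lt_one (by linarith), abs_lt]
    constructor <;> nlinarith
  have hl2 : |lam2 θ ν h| < 1 := by
    rw [hL2, abs_div, abs_of_pos (show (0:ℝ) < 2*D by linarith),
        div_lt_one (by linarith), abs_lt]
    constructor <;> nlinarith
  exact ⟨habs, hd2, heig1, heig2, hne, hl1, hl2⟩

end
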